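/- For a twice continuously differentiable map u : Ω ⊆ ℝⁿ → ℝᴺ, the two vector fields Du ⊗ Du : D²u and |Du|² [Du]^⊥ Δu are pointwise orthogonal in ℝᴺ, where [Du]^⊥ is the orthogonal projection onto the orthogonal complement of the range of Du. Consequently, Δ_∞ u := Du ⊗ Du : D²u + |Du|² [Du]^⊥ Δu = 0 on Ω if and only if both Du ⊗ Du : D²u = 0 and |Du|² [Du]^⊥ Δu = 0 on Ω. -/

import Mathlib

open scoped BigOperators

noncomputable section

/-- Directional derivative `D_i u (x) ∈ ℝᴺ`. -/
def Dc {n N : ℕ} (u : EuclideanSpace ℝ (Fin n) → EuclideanSpace ℝ (Fin N))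
    (x : EuclideanSpace ℝ (Fin n)) (i : Fin n) : EuclideanSpace ℝ (Fin N) :=
  fderiv ℝ u x (EuclideanSpace.single i 1)

/-- Second derivative `D²_{ij} u (x) ∈ ℝᴺ`. -/
def Hc {n N : ℕ} (u : EuclideanSpace ℝ (Fin n) → EuclideanSpace ℝ (Fin N))
    (x : EuclideanSpace ℝ (Fin n)) (i j : Fin n) : EuclideanSpace ℝ (Fin N) :=
  fderiv ℝ (fun y => Dc u y j) x (EuclideanSpace.single i 1)

/-- The tangential vector field `Du ⊗ Du : D²u`, with `α`-component
`Σ_{β,i,j} D_i u_α D_j u_β D²_{ij} u_β`. -/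
def tangPart {n N : ℕ} (u : EuclideanSpace ℝ (Fin n) → EuclideanSpace ℝ (Fin N))
    (x : EuclideanSpace ℝ (Fin n)) : EuclideanSpace ℝ (Fin N) :=
  (WithLp.equiv 2 (Fin N → ℝ)).symm
    (fun α => ∑ β, ∑ i, ∑ j, Dc u x i α * Dc u x j β * Hc u x i j β)

/-- The componentwise Laplacian `Δu = Σ_i D²_{ii} u`. -/
def lapl {n N : ℕ} (u : EuclideanSpace ℝ (Fin n) → EuclideanSpace ℝ (Fin N))
    (x : EuclideanSpace ℝ (Fin n)) : EuclideanSpace ℝ (Fin N) :=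
  ∑ i, Hc u x i i

/-- The range of `Du(x)` as a subspace of `ℝᴺ`. -/
def rngDu {n N : ℕ} (u : EuclideanSpace ℝ (Fin n) → EuclideanSpace ℝ (Fin N))
    (x : EuclideanSpace ℝ (Fin n)) : Submodule ℝ (EuclideanSpace ℝ (Fin N)) :=
  LinearMap.range ((fderiv ℝ u x).toLinearMap)

/-- The normal vector field `|Du|² [Du]^⊥ Δu`, where `[Du]^⊥` is the orthogonal
projection onto the orthogonal complement of the range of `Du`. -/
def normPart {n N : ℕ} (u : EuclideanSpace ℝ (Fin n) → EuclideanSpace ℝ (Fin N))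
    (x : EuclideanSpace ℝ (Fin n)) : EuclideanSpace ℝ (Fin N) :=
  (∑ α, ∑ i, (Dc u x i α) ^ 2) •
    ((Submodule.orthogonalProjectionOnto ((rngDu u x)ᗮ) (lapl u x) : (rngDu u x)ᗮ) :
      EuclideanSpace ℝ (Fin N))

end

/-- the fields `Du ⊗ Du : D²u` and `|Du|² [Du]^⊥ Δu` are pointwise
orthogonal; consequently `Δ_∞ u = 0` at a point iff both parts vanish there. -/
theorem stmt6 {n N : ℕ} (Ω : Set (EuclideanSpace ℝ (Fin n))) (hΩ : IsOpen Ω)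
    (u : EuclideanSpace ℝ (Fin n) → EuclideanSpace ℝ (Fin N))
    (hu : ContDiffOn ℝ 2 u Ω) :
    (∀ x ∈ Ω, (inner ℝ (tangPart u x) (normPart u x) : ℝ) = 0) ∧
    ((∀ x ∈ Ω, tangPart u x + normPart u x = 0) ↔
      (∀ x ∈ Ω, tangPart u x = 0) ∧ (∀ x ∈ Ω, normPart u x = 0)) := by
  have htang : ∀ x, tangPart u x ∈ rngDu u x := by
    intro x
    refine ⟨∑ i, (∑ β, ∑ j, Dc u x j β * Hc u x i j β) • EuclideanSpace.single i (1:ℝ), ?_⟩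
    simp only [ContinuousLinearMap.coe_coe, map_sum, map_smul]
    apply (WithLp.equiv 2 (Fin N → ℝ)).injective
    funext α
    have : (WithLp.equiv 2 (Fin N → ℝ))
        (∑ i, (∑ β, ∑ j, Dc u x j β * Hc u x i j β) • fderiv ℝ u x (EuclideanSpace.single i 1))
        α = ∑ i, (∑ β, ∑ j, Dc u x j β * Hc u x i j β) * Dc u x i α := by
      simp [Dc, smul_eq_mul, WithLp.ofLp_sum]
    rw [this]
    simp only [tangPart, Equiv.apply_symm_apply]
    rw [Finset.sum_comm]
    congr 1; funext i
    rw [Finset.sum_mul]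
    congr 1; funext β
    rw [Finset.sum_mul]
    congr 1; funext j
    ring
  have hperp : ∀ x, (inner ℝ (tangPart u x) (normPart u x) : ℝ) = 0 := by
    intro x
    unfold normPart
    rw [real_inner_smul_right]
    have h := ((Submodule.orthogonalProjectionOnto ((rngDu u x)ᗮ) (lapl u x)).2 : _ ∈ (rngDu u x)ᗮ)
    rw [Submodule.mem_orthogonal] at h
    rw [h _ (htang x), mul_zero]
  refine ⟨fun x _ => hperp x, ⟨fun h => ?_, fun ⟨h1, h2⟩ x hx => by rw [h1 x hx, h2 x hx, add_zero]⟩⟩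
  have key : ∀ x ∈ Ω, tangPart u x = 0 ∧ normPart u x = 0 := by
    intro x hx
    have hb : normPart u x = -tangPart u x := by
      have := h x hx; linear_combination (norm := module) this
    have : (inner ℝ (tangPart u x) (tangPart u x) : ℝ) = 0 := by
      have := hperp x
      rw [hb, inner_neg_right] at this
      linarith
    have ht0 : tangPart u x = 0 := by
      rwa [inner_self_eq_zero] at this
    exact ⟨ht0, by rw [hb, ht0, neg_zero]⟩
  exact ⟨fun x hx => (key x hx).1, fun x hx => (key x hx).2⟩
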